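/- Let μ be a (C,γ)-absolutely decaying measure on ℝⁿ with support K, and let α < 1/(2C^{1/γ}+1) and ε = 1 − C(2α/(1−α))^γ. For any 0 < β < 1, N ∈ ℕ, r = ⌊log_{1/(1−ε)} N⌋ + 1, we have (1−ε)^r N < 1; consequently, given a ball B(x,ρ) with x ∈ K, 0 < ρ < ρ₀, and N affine hyperplanes L₁,…,L_N, there is a finite sequence of r nested choices (each shrinking the radius by factor α and allowing an adversary to shrink by factor β in between, staying centered in K) resulting in a ball B(x', α(αβ)^{r−1}ρ)-sized ball disjoint from the (α(αβ)^{r−1}ρ)-neighborhoods of all N hyperplanes. -/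

import Mathlib

open MeasureTheory Metric Set Filter RealInnerProductSpace

/-- The (topological) support of a measure on `ℝⁿ`. -/
def measSupport {n : ℕ} (μ : Measure (EuclideanSpace ℝ (Fin n))) :
    Set (EuclideanSpace ℝ (Fin n)) :=
  {x | ∀ ρ : ℝ, 0 < ρ → 0 < μ (ball x ρ)}

/-- An affine hyperplane in `ℝⁿ`. -/
def IsAffineHyperplane {n : ℕ} (L : Set (EuclideanSpace ℝ (Fin n))) : Prop :=
  ∃ (u : EuclideanSpace ℝ (Fin n)) (b : ℝ), u ≠ 0 ∧ L = {x | ⟪u, x⟫ = b}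

/-- `μ` is `(C,γ)`-absolutely decaying with threshold `ρ₀`. -/
def AbsolutelyDecaying {n : ℕ} (μ : Measure (EuclideanSpace ℝ (Fin n)))
    (C γ ρ₀ : ℝ) : Prop :=
  ∀ L : Set (EuclideanSpace ℝ (Fin n)), IsAffineHyperplane L →
    ∀ x ∈ measSupport μ, ∀ ρ : ℝ, 0 < ρ → ρ < ρ₀ → ∀ ε : ℝ, 0 < ε →
      μ (closedBall x ρ ∩ cthickening ε L) <
        ENNReal.ofReal (C * (ε / ρ) ^ γ) * μ (closedBall x ρ)

open scoped ENNReal NNReal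

lemma measSupport_compl_null {n : ℕ} (μ : Measure (EuclideanSpace ℝ (Fin n))) :
    μ (measSupport μ)ᶜ = 0 := by
  apply measure_null_of_locally_null
  intro x hx
  simp only [measSupport, mem_compl_iff, mem_setOf_eq, not_forall] at hx
  obtain ⟨ρ, hρ, h⟩ := hx
  refine ⟨ball x ρ, mem_nhdsWithin_of_mem_nhds (ball_mem_nhds x hρ), ?_⟩
  push_neg at h
  exact le_antisymm h zero_le

open Classical in
lemma core_escape {n N : ℕ} (μ : Measure (EuclideanSpace ℝ (Fin n)))
    [IsLocallyFiniteMeasure μ]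
    (C γ ρ₀ : ℝ) (hγ : 0 < γ) (hμ : AbsolutelyDecaying μ C γ ρ₀)
    (α ε : ℝ) (hα : 0 < α) (hα1 : α < 1)
    (hεeq : C * (2 * α / (1 - α)) ^ γ = 1 - ε) (h1ε : 0 < 1 - ε)
    (L : Fin N → Set (EuclideanSpace ℝ (Fin n))) (hL : ∀ i, IsAffineHyperplane (L i))
    (z : EuclideanSpace ℝ (Fin n)) (hz : z ∈ measSupport μ)
    (ρ' : ℝ) (h0 : 0 < ρ') (h1 : ρ' < ρ₀) (S : Finset (Fin N)) :
    ∃ y, y ∈ measSupport μ ∧ y ∈ closedBall z ((1 - α) * ρ') ∧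
      (S.Nonempty →
        ((S.filter (fun i => y ∈ cthickening (2 * (α * ρ')) (L i))).card : ℝ)
          < (1 - ε) * S.card) := by
  have h1α : 0 < 1 - α := by linarith
  have hrad : 0 < (1 - α) * ρ' := mul_pos h1α h0
  rcases S.eq_empty_or_nonempty with hS | hS
  · exact ⟨z, hz, mem_closedBall_self hrad.le, by simp [hS]⟩
  by_contra hcon
  push_neg at hcon
  set B := closedBall z ((1 - α) * ρ') with hB
  set T : Fin N → Set (EuclideanSpace ℝ (Fin n)) :=
    fun i => cthickening (2 * (α * ρ')) (L i) with hT
  have hcon' : ∀ y ∈ measSupport μ, y ∈ B →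
      (1 - ε) * S.card ≤ ((S.filter (fun i => y ∈ T i)).card : ℝ) := by
    intro y hy hyB
    exact (hcon y hy hyB).2
  have hBpos : 0 < μ B := lt_of_lt_of_le (hz _ hrad) (measure_mono ball_subset_closedBall)
  have hBfin : μ B ≠ ⊤ := (isCompact_closedBall z _).measure_lt_top.ne
  -- per hyperplane bound
  have hbound : ∀ i, μ (B ∩ T i) < ENNReal.ofReal (1 - ε) * μ B := by
    intro i
    have h := hμ (L i) (hL i) z hz ((1 - α) * ρ') hrad
      (by nlinarith) (2 * (α * ρ')) (by positivity)
    have hratio : C * ((2 * (α * ρ')) / ((1 - α) * ρ')) ^ γ = 1 - ε := by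
      rw [← hεeq]
      congr 2
      field_simp
    rwa [hratio] at h
  -- lintegral identity
  have hTmeas : ∀ i, MeasurableSet (T i) := fun i => (isClosed_cthickening).measurableSet
  have hsum : ∫⁻ y in B, (∑ i ∈ S, (T i).indicator (1 : EuclideanSpace ℝ (Fin n) → ℝ≥0∞) y) ∂μ
      = ∑ i ∈ S, μ (B ∩ T i) := by
    rw [lintegral_finset_sum]
    · refine Finset.sum_congr rfl fun i _ => ?_
      rw [lintegral_indicator_one (hTmeas i), Measure.restrict_apply (hTmeas i),
        inter_comm]
    · exact fun i _ => (measurable_one.indicator (hTmeas i))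
  -- lower bound
  have hlow : ENNReal.ofReal ((1 - ε) * S.card) * μ B
      ≤ ∫⁻ y in B, (∑ i ∈ S, (T i).indicator (1 : EuclideanSpace ℝ (Fin n) → ℝ≥0∞) y) ∂μ := by
    have hae : ∀ᵐ y ∂(μ.restrict B), ENNReal.ofReal ((1 - ε) * S.card)
        ≤ ∑ i ∈ S, (T i).indicator (1 : EuclideanSpace ℝ (Fin n) → ℝ≥0∞) y := by
      have hsupp : ∀ᵐ y ∂μ, y ∈ measSupport μ := by
        rw [ae_iff]
        exact measSupport_compl_null μ
      filter_upwards [ae_restrict_of_ae hsupp, ae_restrict_mem measurableSet_closedBall]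
        with y hy hyB
      have hcount : (∑ i ∈ S, (T i).indicator (1 : EuclideanSpace ℝ (Fin n) → ℝ≥0∞) y)
          = ((S.filter (fun i => y ∈ T i)).card : ℝ≥0∞) := by
        rw [← Finset.sum_boole]
        refine Finset.sum_congr rfl fun i _ => ?_
        simp [Set.indicator_apply]
      rw [hcount]
      have := hcon' y hy hyB
      calc ENNReal.ofReal ((1 - ε) * S.card)
          ≤ ENNReal.ofReal ((S.filter (fun i => y ∈ T i)).card : ℝ) :=
            ENNReal.ofReal_le_ofReal this
        _ = ((S.filter (fun i => y ∈ T i)).card : ℝ≥0∞) := by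
            rw [ENNReal.ofReal_natCast]
    calc ENNReal.ofReal ((1 - ε) * S.card) * μ B
        = ∫⁻ _ in B, ENNReal.ofReal ((1 - ε) * S.card) ∂μ := by
          rw [setLIntegral_const, ]
      _ ≤ _ := lintegral_mono_ae hae
  rw [hsum] at hlow
  -- pass to reals
  have hfin : ∀ i ∈ S, μ (B ∩ T i) ≠ ⊤ :=
    fun i _ => (lt_of_le_of_lt (measure_mono inter_subset_left) hBfin.lt_top).ne
  have hsumfin : (∑ i ∈ S, μ (B ∩ T i)) ≠ ⊤ := by
    rw [ENNReal.sum_ne_top]; exact hfin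
  set M := (μ B).toReal with hM
  have hMpos : 0 < M := ENNReal.toReal_pos hBpos.ne' hBfin
  have hlowR : (1 - ε) * S.card * M ≤ ∑ i ∈ S, (μ (B ∩ T i)).toReal := by
    have := ENNReal.toReal_mono hsumfin hlow
    rwa [ENNReal.toReal_mul, ENNReal.toReal_ofReal (by positivity), ENNReal.toReal_sum hfin]
      at this
  have hupR : ∑ i ∈ S, (μ (B ∩ T i)).toReal < ∑ _i ∈ S, (1 - ε) * M := by
    refine Finset.sum_lt_sum_of_nonempty hS fun i _ => ?_
    have h := hbound i
    have := ENNReal.toReal_strict_mono (by finiteness) h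
    rwa [ENNReal.toReal_mul, ENNReal.toReal_ofReal h1ε.le] at this
  rw [Finset.sum_const, nsmul_eq_mul] at hupR
  nlinarith [hlowR, hupR]
open Classical in
noncomputable def pickFn {n N : ℕ} (μ : Measure (EuclideanSpace ℝ (Fin n))) (α β ε ρ : ℝ)
    (L : Fin N → Set (EuclideanSpace ℝ (Fin n))) (z : EuclideanSpace ℝ (Fin n))
    (S : Finset (Fin N)) (k : ℕ) : EuclideanSpace ℝ (Fin n) :=
  if h : ∃ y, y ∈ measSupport μ ∧ y ∈ closedBall z ((1 - α) * ((α * β) ^ k * ρ)) ∧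
      (S.Nonempty →
        ((S.filter (fun i => y ∈ cthickening (2 * (α * ((α * β) ^ k * ρ))) (L i))).card : ℝ)
          < (1 - ε) * S.card)
  then h.choose else z

open Classical in
noncomputable def stratAux {n N : ℕ} (μ : Measure (EuclideanSpace ℝ (Fin n))) (α β ε ρ : ℝ)
    (L : Fin N → Set (EuclideanSpace ℝ (Fin n))) (c : ℕ → EuclideanSpace ℝ (Fin n)) :
    ℕ → EuclideanSpace ℝ (Fin n) × Finset (Fin N)
  | 0 => (pickFn μ α β ε ρ L (c 0) Finset.univ 0,
      Finset.univ.filter (fun i => pickFn μ α β ε ρ L (c 0) Finset.univ 0 ∈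
        cthickening (2 * (α * ((α * β) ^ 0 * ρ))) (L i)))
  | (k+1) => (pickFn μ α β ε ρ L (c (k+1)) (stratAux μ α β ε ρ L c k).2 (k+1),
      (stratAux μ α β ε ρ L c k).2.filter
        (fun i => pickFn μ α β ε ρ L (c (k+1)) (stratAux μ α β ε ρ L c k).2 (k+1) ∈
          cthickening (2 * (α * ((α * β) ^ (k+1) * ρ))) (L i)))

noncomputable def Sprev {n N : ℕ} (μ : Measure (EuclideanSpace ℝ (Fin n))) (α β ε ρ : ℝ)
    (L : Fin N → Set (EuclideanSpace ℝ (Fin n))) (c : ℕ → EuclideanSpace ℝ (Fin n)) :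
    ℕ → Finset (Fin N)
  | 0 => Finset.univ
  | (k+1) => (stratAux μ α β ε ρ L c k).2

lemma stratAux_fst {n N : ℕ} (μ : Measure (EuclideanSpace ℝ (Fin n))) (α β ε ρ : ℝ)
    (L : Fin N → Set (EuclideanSpace ℝ (Fin n))) (c : ℕ → EuclideanSpace ℝ (Fin n)) (k : ℕ) :
    (stratAux μ α β ε ρ L c k).1 = pickFn μ α β ε ρ L (c k) (Sprev μ α β ε ρ L c k) k := by
  cases k <;> rfl

open Classical in
lemma stratAux_snd {n N : ℕ} (μ : Measure (EuclideanSpace ℝ (Fin n))) (α β ε ρ : ℝ)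
    (L : Fin N → Set (EuclideanSpace ℝ (Fin n))) (c : ℕ → EuclideanSpace ℝ (Fin n)) (k : ℕ) :
    (stratAux μ α β ε ρ L c k).2 = (Sprev μ α β ε ρ L c k).filter
      (fun i => (stratAux μ α β ε ρ L c k).1 ∈
        cthickening (2 * (α * ((α * β) ^ k * ρ))) (L i)) := by
  cases k <;> rfl

lemma stratAux_causal {n N : ℕ} (μ : Measure (EuclideanSpace ℝ (Fin n))) (α β ε ρ : ℝ)
    (L : Fin N → Set (EuclideanSpace ℝ (Fin n))) (c c' : ℕ → EuclideanSpace ℝ (Fin n)) (k : ℕ)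
    (h : ∀ j ≤ k, c j = c' j) :
    stratAux μ α β ε ρ L c k = stratAux μ α β ε ρ L c' k := by
  induction k with
  | zero => simp only [stratAux]; rw [h 0 (le_refl 0)]
  | succ k ih =>
    have hc : c (k+1) = c' (k+1) := h _ (le_refl _)
    have hprev := ih (fun j hj => h j (le_trans hj (Nat.le_succ k)))
    simp only [stratAux]; rw [hc, hprev]

set_option maxHeartbeats 1000000 in
/-- with `r = ⌊log_{1/(1-ε)} N⌋ + 1` one has `(1-ε)^r N < 1`, and
consequently, playing `r` rounds of the `(α,β)`-game on `K = supp μ` starting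
from `B(x,ρ)`, Alice has a (causal) strategy whose moves stay in `K`, shrink
radii by `α` (while the adversary shrinks by `β`), and whose `r`-th ball is
disjoint from the `α(αβ)^{r-1}ρ`-neighborhoods of all `N` given hyperplanes. -/
theorem escape_all_hyperplanes_in_r_rounds {n : ℕ}
    (μ : Measure (EuclideanSpace ℝ (Fin n))) [IsLocallyFiniteMeasure μ]
    (C γ ρ₀ : ℝ) (hC : 0 < C) (hγ : 0 < γ) (hρ₀ : 0 < ρ₀)
    (hμ : AbsolutelyDecaying μ C γ ρ₀)
    (α : ℝ) (hα : 0 < α) (hα' : α < 1 / (2 * C ^ (1/γ) + 1))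
    (ε : ℝ) (hε : ε = 1 - C * (2 * α / (1 - α)) ^ γ)
    (β : ℝ) (hβ : 0 < β) (hβ' : β < 1)
    (N : ℕ) (hN : 0 < N)
    (r : ℕ) (hr : r = ⌊Real.logb (1 / (1 - ε)) N⌋₊ + 1) :
    (1 - ε) ^ r * N < 1 ∧
    ∀ (x : EuclideanSpace ℝ (Fin n)), x ∈ measSupport μ →
    ∀ ρ : ℝ, 0 < ρ → ρ < ρ₀ →
    ∀ L : Fin N → Set (EuclideanSpace ℝ (Fin n)),
      (∀ i, IsAffineHyperplane (L i)) →
    ∃ f : (ℕ → EuclideanSpace ℝ (Fin n)) → ℕ → EuclideanSpace ℝ (Fin n),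
      -- the strategy is causal: it depends only on the adversary's past moves
      (∀ c c' : ℕ → EuclideanSpace ℝ (Fin n), ∀ k : ℕ,
        (∀ j ≤ k, c j = c' j) → f c k = f c' k) ∧
      ∀ c : ℕ → EuclideanSpace ℝ (Fin n),
        c 0 = x →
        (∀ k, c k ∈ measSupport μ) →
        -- the adversary's `(k+1)`-st ball is (β-scaled and) inside Alice's `k`-th ball
        (∀ k, k + 1 < r →
          closedBall (c (k + 1)) ((α * β) ^ (k + 1) * ρ) ⊆
            closedBall (f c k) (α * (α * β) ^ k * ρ)) →
        -- Alice's moves stay in `K` and are legal (α-scaled nested balls) ...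
        ((∀ k, k < r → f c k ∈ measSupport μ ∧
            closedBall (f c k) (α * (α * β) ^ k * ρ) ⊆
              closedBall (c k) ((α * β) ^ k * ρ)) ∧
        -- ... and her final ball avoids the neighborhoods of all the hyperplanes
          ∀ i, closedBall (f c (r - 1)) (α * (α * β) ^ (r - 1) * ρ) ∩
            cthickening (α * (α * β) ^ (r - 1) * ρ) (L i) = ∅) := by
  classical
  -- basic facts about α and ε
  have hCpow : 0 < C ^ (1/γ) := Real.rpow_pos_of_pos hC _
  have hden : (0:ℝ) < 2 * C ^ (1/γ) + 1 := by positivity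
  have hαd : α * (2 * C ^ (1/γ) + 1) < 1 := (lt_div_iff₀ hden).mp hα'
  have hα1 : α < 1 := by nlinarith
  have h1α : (0:ℝ) < 1 - α := by linarith
  have htpos : (0:ℝ) < 2 * α / (1 - α) := by positivity
  have h2αc : 2 * α * C ^ (1/γ) < 1 - α := by nlinarith
  have htlt : 2 * α / (1 - α) < C ^ (-(1/γ)) := by
    rw [Real.rpow_neg hC.le, ← one_div, lt_div_iff₀ hCpow, div_mul_eq_mul_div,
      div_lt_one h1α]
    nlinarith
  have hpow : (2 * α / (1 - α)) ^ γ < C⁻¹ := by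
    have h := Real.rpow_lt_rpow htpos.le htlt hγ
    rwa [← Real.rpow_mul hC.le, neg_mul, one_div, inv_mul_cancel₀ hγ.ne',
      Real.rpow_neg_one] at h
  have hε0 : 0 < ε := by
    rw [hε]
    have : C * (2 * α / (1 - α)) ^ γ < C * C⁻¹ := mul_lt_mul_of_pos_left hpow hC
    rw [mul_inv_cancel₀ hC.ne'] at this
    linarith
  have hε1 : ε < 1 := by
    rw [hε]
    have : 0 < C * (2 * α / (1 - α)) ^ γ := mul_pos hC (Real.rpow_pos_of_pos htpos γ)
    linarith
  have h1ε : (0:ℝ) < 1 - ε := by linarith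
  have hεeq : C * (2 * α / (1 - α)) ^ γ = 1 - ε := by rw [hε]; ring
  -- part 1
  have hb : 1 < 1 / (1 - ε) := one_lt_one_div h1ε (by linarith)
  have hNpos : (0:ℝ) < N := by exact_mod_cast hN
  have hlog : Real.logb (1/(1-ε)) N < (r:ℝ) := by
    rw [hr]; push_cast; exact Nat.lt_floor_add_one _
  have hNlt : (N:ℝ) < (1/(1-ε)) ^ r := by
    have h := (Real.logb_lt_iff_lt_rpow hb hNpos).mp hlog
    rwa [Real.rpow_natCast] at h
  have part1 : (1-ε)^r * N < 1 := by
    have hpowpos : (0:ℝ) < (1-ε)^r := pow_pos h1ε r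
    have h2 : (1-ε)^r * N < (1-ε)^r * (1/(1-ε))^r := mul_lt_mul_of_pos_left hNlt hpowpos
    have h3 : (1-ε) * (1/(1-ε)) = 1 := by field_simp
    rwa [← mul_pow, h3, one_pow] at h2
  refine ⟨part1, ?_⟩
  intro x hx ρ hρ hρρ₀ L hL
  refine ⟨fun c k => (stratAux μ α β ε ρ L c k).1, ?_, ?_⟩
  · intro c c' k h
    show (stratAux μ α β ε ρ L c k).1 = (stratAux μ α β ε ρ L c' k).1
    rw [stratAux_causal μ α β ε ρ L c c' k h]
  intro c hc0 hcsupp hnest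
  set y : ℕ → EuclideanSpace ℝ (Fin n) := fun k => (stratAux μ α β ε ρ L c k).1 with hy
  set S : ℕ → Finset (Fin N) := fun k => Sprev μ α β ε ρ L c k with hSdef
  have hrad : ∀ k, 0 < (α*β)^k * ρ := fun k => mul_pos (pow_pos (mul_pos hα hβ) k) hρ
  have hab1 : α * β ≤ 1 := by nlinarith
  have hradlt : ∀ k, (α*β)^k * ρ < ρ₀ := by
    intro k
    have h1 : (α*β)^k ≤ 1 := pow_le_one₀ (by positivity) hab1
    nlinarith
  have hEx : ∀ k, ∃ yy, yy ∈ measSupport μ ∧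
      yy ∈ closedBall (c k) ((1 - α) * ((α * β) ^ k * ρ)) ∧
      ((S k).Nonempty →
        (((S k).filter (fun i => yy ∈ cthickening (2 * (α * ((α * β) ^ k * ρ))) (L i))).card : ℝ)
          < (1 - ε) * (S k).card) :=
    fun k => core_escape μ C γ ρ₀ hγ hμ α ε hα hα1 hεeq h1ε L hL (c k) (hcsupp k) _
      (hrad k) (hradlt k) (S k)
  have hspec : ∀ k, y k ∈ measSupport μ ∧
      y k ∈ closedBall (c k) ((1 - α) * ((α * β) ^ k * ρ)) ∧
      ((S k).Nonempty →
        (((S k).filter (fun i => y k ∈ cthickening (2 * (α * ((α * β) ^ k * ρ))) (L i))).card : ℝ)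
          < (1 - ε) * (S k).card) := by
    intro k
    have h1 : y k = pickFn μ α β ε ρ L (c k) (S k) k := stratAux_fst μ α β ε ρ L c k
    rw [h1, pickFn, dif_pos (hEx k)]
    exact (hEx k).choose_spec
  have hSsucc : ∀ k, S (k+1) = (S k).filter
      (fun i => y k ∈ cthickening (2 * (α * ((α * β) ^ k * ρ))) (L i)) := by
    intro k
    show Sprev μ α β ε ρ L c (k+1) = _
    rw [Sprev, stratAux_snd]
  have hS0 : S 0 = Finset.univ := rfl
  have hcard : ∀ k, ((S k).card : ℝ) ≤ (1-ε)^k * N := by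
    intro k
    induction k with
    | zero => simp [hS0]
    | succ k ih =>
      rcases (S k).eq_empty_or_nonempty with he | hne
      · rw [hSsucc k, he]
        simp only [Finset.filter_empty, Finset.card_empty, Nat.cast_zero]
        exact mul_nonneg (pow_nonneg h1ε.le _) (Nat.cast_nonneg N)
      · have h3 := (hspec k).2.2 hne
        rw [hSsucc k]
        have h4 : (1-ε) * ((S k).card : ℝ) ≤ (1-ε)^(k+1) * N := by
          have h5 := mul_le_mul_of_nonneg_left ih h1ε.le
          calc (1-ε) * ((S k).card : ℝ) ≤ (1-ε) * ((1-ε)^k * N) := h5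
            _ = (1-ε)^(k+1) * N := by ring
        exact (h3.trans_le h4).le
  have hSr : S r = ∅ := by
    have h1 : ((S r).card : ℝ) < 1 := lt_of_le_of_lt (hcard r) part1
    have h2 : (S r).card = 0 := by exact_mod_cast Nat.lt_one_iff.mp (by exact_mod_cast h1)
    exact Finset.card_eq_zero.mp h2
  have hlegal : ∀ k, y k ∈ measSupport μ ∧
      closedBall (y k) (α*(α*β)^k*ρ) ⊆ closedBall (c k) ((α*β)^k*ρ) := by
    intro k
    refine ⟨(hspec k).1, ?_⟩
    have hd := (hspec k).2.1
    rw [mem_closedBall] at hd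
    apply closedBall_subset_closedBall'
    nlinarith [hd]
  have hchain : ∀ j k, j ≤ k → k < r →
      closedBall (y k) (α*(α*β)^k*ρ) ⊆ closedBall (y j) (α*(α*β)^j*ρ) := by
    intro j k hjk hkr
    induction k, hjk using Nat.le_induction with
    | base => exact subset_rfl
    | succ k hjk ih =>
      have hk : k < r := Nat.lt_of_succ_lt hkr
      calc closedBall (y (k+1)) (α*(α*β)^(k+1)*ρ)
          ⊆ closedBall (c (k+1)) ((α*β)^(k+1)*ρ) := (hlegal (k+1)).2
        _ ⊆ closedBall (y k) (α*(α*β)^k*ρ) := hnest k hkr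
        _ ⊆ closedBall (y j) (α*(α*β)^j*ρ) := ih hk
  have hesc : ∀ i k, i ∉ S k →
      ∃ j, j < k ∧ y j ∉ cthickening (2 * (α * ((α * β) ^ j * ρ))) (L i) := by
    intro i k
    induction k with
    | zero => intro h; exact absurd (by simp [hS0] : i ∈ S 0) h
    | succ k ih =>
      intro h
      rw [hSsucc k, Finset.mem_filter] at h
      push_neg at h
      by_cases hik : i ∈ S k
      · exact ⟨k, Nat.lt_succ_self k, h hik⟩
      · obtain ⟨j, hj1, hj2⟩ := ih hik
        exact ⟨j, Nat.lt_succ_of_lt hj1, hj2⟩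
  refine ⟨fun k _ => hlegal k, ?_⟩
  intro i
  have hi : i ∉ S r := by rw [hSr]; exact Finset.notMem_empty i
  obtain ⟨j, hjr, hj⟩ := hesc i r hi
  have hr1 : 1 ≤ r := by omega
  have hjle : j ≤ r - 1 := by omega
  have hrr : r - 1 < r := by omega
  have hdisj : closedBall (y j) (α*(α*β)^j*ρ) ∩ cthickening (α*(α*β)^j*ρ) (L i) = ∅ := by
    rw [eq_empty_iff_forall_notMem]
    rintro w ⟨hw1, hw2⟩
    apply hj
    rw [mem_cthickening_iff]
    calc EMetric.infEdist (y j) (L i)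
        ≤ edist (y j) w + EMetric.infEdist w (L i) := EMetric.infEdist_le_edist_add_infEdist
      _ ≤ ENNReal.ofReal (α*(α*β)^j*ρ) + ENNReal.ofReal (α*(α*β)^j*ρ) := by
          refine add_le_add ?_ (mem_cthickening_iff.mp hw2)
          rw [edist_dist]
          exact ENNReal.ofReal_le_ofReal (by rw [mem_closedBall] at hw1; rw [dist_comm]; exact hw1)
      _ = ENNReal.ofReal (2 * (α * ((α * β) ^ j * ρ))) := by
          rw [← ENNReal.ofReal_add (by positivity) (by positivity)]
          congr 1; ring
  rw [eq_empty_iff_forall_notMem]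
  rintro w ⟨hw1, hw2⟩
  have hmono : α*(α*β)^(r-1)*ρ ≤ α*(α*β)^j*ρ := by
    have h5 := pow_le_pow_of_le_one (by positivity : (0:ℝ) ≤ α*β) hab1 hjle
    have h6 := mul_le_mul_of_nonneg_left (mul_le_mul_of_nonneg_right h5 hρ.le) hα.le
    calc α*(α*β)^(r-1)*ρ = α * ((α*β)^(r-1) * ρ) := by ring
      _ ≤ α * ((α*β)^j * ρ) := h6
      _ = α*(α*β)^j*ρ := by ring
  have h1 : w ∈ closedBall (y j) (α*(α*β)^j*ρ) := hchain j (r-1) hjle hrr hw1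
  have h2 : w ∈ cthickening (α*(α*β)^j*ρ) (L i) := cthickening_mono hmono (L i) hw2
  rw [eq_empty_iff_forall_notMem] at hdisj
  exact hdisj w ⟨h1, h2⟩
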